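/- The abelianization of the hybrid H'(3) is a finite group. -/

import Mathlib

noncomputable section

open Matrix Complex

/-- GL(3,ℂ): the group of invertible 3×3 complex matrices. -/
abbrev GL3 : Type := (Matrix (Fin 3) (Fin 3) ℂ)ˣ

/-- PGL(3,ℂ): the quotient of GL(3,ℂ) by its center. -/
abbrev PGL3 : Type := GL3 ⧸ Subgroup.center GL3

/-- The projection GL(3,ℂ) → PGL(3,ℂ). -/
def pgl : GL3 →* PGL3 := QuotientGroup.mk' (Subgroup.center GL3)

/-- The class [M] ∈ PGL(3,ℂ) of an (invertible) matrix M. -/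
noncomputable def cls (M : Matrix (Fin 3) (Fin 3) ℂ) : PGL3 := by
  classical exact if h : IsUnit M then pgl h.unit else 1

/-- The Hermitian matrix of signature (2,1) defining the Siegel model. -/
def Hform : Matrix (Fin 3) (Fin 3) ℂ := !![0,0,1; 0,1,0; 1,0,0]

lemma Hform_mul_Hform : Hform * Hform = 1 := by
  rw [Hform, Matrix.mul_fin_three, Matrix.one_fin_three]
  norm_num

/-- U(2,1,O): the subgroup of GL(3,ℂ) of matrices with entries in O
satisfying Mᴴ H M = H, for O a subring of ℂ closed under conjugation. -/
def U21 (O : Subring ℂ) (hO : ∀ z ∈ O, (starRingEnd ℂ) z ∈ O) : Subgroup GL3 where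
  carrier := {M : GL3 | (∀ i j, (M : Matrix (Fin 3) (Fin 3) ℂ) i j ∈ O) ∧
      (M : Matrix (Fin 3) (Fin 3) ℂ)ᴴ * Hform * (M : Matrix (Fin 3) (Fin 3) ℂ) = Hform}
  one_mem' := by
    constructor
    · intro i j
      by_cases h : i = j <;> simp [Matrix.one_apply, h, Subring.one_mem, Subring.zero_mem]
    · simp
  mul_mem' := by
    rintro a b ⟨ha1, ha2⟩ ⟨hb1, hb2⟩
    constructor
    · intro i j
      rw [Units.val_mul, Matrix.mul_apply]
      exact Subring.sum_mem _ fun k _ => Subring.mul_mem _ (ha1 i k) (hb1 k j)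
    · rw [Units.val_mul, Matrix.conjTranspose_mul]
      calc (↑b)ᴴ * (↑a)ᴴ * Hform * ((↑a : Matrix (Fin 3) (Fin 3) ℂ) * ↑b)
          = (↑b)ᴴ * ((↑a)ᴴ * Hform * ↑a) * ↑b := by simp only [mul_assoc]
        _ = (↑b)ᴴ * Hform * ↑b := by rw [ha2]
        _ = Hform := hb2
  inv_mem' := by
    rintro a ⟨ha1, ha2⟩
    have hBA : (Hform * (a.val)ᴴ * Hform) * a.val = 1 := by
      calc (Hform * (a.val)ᴴ * Hform) * a.val
          = Hform * ((a.val)ᴴ * Hform * a.val) := by simp only [mul_assoc]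
        _ = Hform * Hform := by rw [ha2]
        _ = 1 := Hform_mul_Hform
    have hInv : (a⁻¹).val = Hform * (a.val)ᴴ * Hform :=
      Units.inv_eq_of_mul_eq_one_left hBA
    have hab : a.val * (a⁻¹).val = 1 := a.mul_inv
    constructor
    · intro i j
      rw [hInv]
      simp only [Matrix.mul_apply, Fin.sum_univ_three]
      fin_cases i <;> fin_cases j <;>
        simp [Hform, Matrix.conjTranspose_apply, Matrix.vecHead, Matrix.vecTail, Function.comp] <;>
        exact hO _ (ha1 _ _)
    · calc ((a⁻¹).val)ᴴ * Hform * (a⁻¹).val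
          = ((a⁻¹).val)ᴴ * ((a.val)ᴴ * Hform * a.val) * (a⁻¹).val := by rw [ha2]
        _ = (a.val * (a⁻¹).val)ᴴ * Hform * (a.val * (a⁻¹).val) := by
            rw [Matrix.conjTranspose_mul]; simp only [mul_assoc]
        _ = Hform := by rw [hab]; simp

/-- PU(2,1,O): the image of U(2,1,O) in PGL(3,ℂ). -/
def PU21 (O : Subring ℂ) (hO : ∀ z ∈ O, (starRingEnd ℂ) z ∈ O) : Subgroup PGL3 :=
  (U21 O hO).map pgl

lemma conjClosed (s : Set ℂ) (h : ∀ z ∈ s, (starRingEnd ℂ) z ∈ Subring.closure s) :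
    ∀ z ∈ Subring.closure s, (starRingEnd ℂ) z ∈ Subring.closure s := by
  intro z hz
  have hle : Subring.closure s ≤ (Subring.closure s).comap (starRingEnd ℂ) :=
    Subring.closure_le.mpr fun x hx => Subring.mem_comap.mpr (h x hx)
  exact Subring.mem_comap.mp (hle hz)


-- test ring pieces
section rings
open Matrix Complex

/-- ω = (−1+i√3)/2, a primitive cube root of unity. -/
def omega3 : ℂ := (-1 + Complex.I * (Real.sqrt 3 : ℝ)) / 2

/-- O₃ = ℤ[ω], the Eisenstein integers. -/
def O3 : Subring ℂ := Subring.closure {omega3}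

lemma conj_omega3 : (starRingEnd ℂ) omega3 = -1 - omega3 := by
  rw [omega3]
  rw [map_div₀, map_add, _root_.map_mul, Complex.conj_I, Complex.conj_ofReal]
  rw [map_neg, _root_.map_one, _root_.map_ofNat]
  ring

lemma hO3 : ∀ z ∈ O3, (starRingEnd ℂ) z ∈ O3 := by
  apply conjClosed
  intro z hz
  rw [Set.mem_singleton_iff] at hz
  subst hz
  rw [conj_omega3]
  exact sub_mem (neg_mem (Subring.one_mem _)) (Subring.subset_closure rfl)

/-- O₁ = ℤ[i], the Gaussian integers. -/
def O1 : Subring ℂ := Subring.closure {Complex.I}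

lemma hO1 : ∀ z ∈ O1, (starRingEnd ℂ) z ∈ O1 := by
  apply conjClosed
  intro z hz
  rw [Set.mem_singleton_iff] at hz
  subst hz
  rw [Complex.conj_I]
  exact neg_mem (Subring.subset_closure rfl)

/-- τ = (1+i√7)/2. -/
def tau7 : ℂ := (1 + Complex.I * (Real.sqrt 7 : ℝ)) / 2

/-- O₇ = ℤ[(1+i√7)/2], the ring of integers of ℚ(i√7). -/
def O7 : Subring ℂ := Subring.closure {tau7}

lemma conj_tau7 : (starRingEnd ℂ) tau7 = 1 - tau7 := by
  rw [tau7]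
  rw [map_div₀, map_add, _root_.map_mul, Complex.conj_I, Complex.conj_ofReal]
  rw [_root_.map_one, _root_.map_ofNat]
  ring

lemma hO7 : ∀ z ∈ O7, (starRingEnd ℂ) z ∈ O7 := by
  apply conjClosed
  intro z hz
  rw [Set.mem_singleton_iff] at hz
  subst hz
  rw [conj_tau7]
  exact sub_mem (Subring.one_mem _) (Subring.subset_closure rfl)

end rings

section matrices
open Matrix Complex

/-- The Cayley transform J. -/
def Jmat : Matrix (Fin 3) (Fin 3) ℂ := !![1,1,0; 0,1,-1; 1,1,-1]

-- d = 3 ------------------------------------------------------------------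
def E1d3 : Matrix (Fin 3) (Fin 3) ℂ :=
  !![omega3^2, omega3^2 - 1, omega3 + 2;
     Complex.I * (Real.sqrt 3 : ℝ), 1 + Complex.I * (Real.sqrt 3 : ℝ), omega3^2 - 1;
     Complex.I * (Real.sqrt 3 : ℝ), Complex.I * (Real.sqrt 3 : ℝ), omega3^2]

def U1d3 : Matrix (Fin 3) (Fin 3) ℂ :=
  !![1, 0, Complex.I * (Real.sqrt 3 : ℝ); 0, 1, 0; 0, 0, 1]

def U2d3 : Matrix (Fin 3) (Fin 3) ℂ :=
  !![1, 0, 0; 0, 1, 0; Complex.I * (Real.sqrt 3 : ℝ), 0, 1]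

def I1d3 : Matrix (Fin 3) (Fin 3) ℂ := Jmat⁻¹ * !![-1,0,0; 0,1,0; 0,0,-1] * Jmat

def I2d3 : Matrix (Fin 3) (Fin 3) ℂ := Jmat⁻¹ * !![1,0,0; 0,-1,0; 0,0,-1] * Jmat

/-- The Falbel–Parker generators of PU(2,1,O₃). -/
def Pd3 : Matrix (Fin 3) (Fin 3) ℂ := !![1, 1, omega3; 0, omega3, -omega3; 0, 0, 1]

def Qd3 : Matrix (Fin 3) (Fin 3) ℂ := !![1, 1, omega3; 0, -1, 1; 0, 0, 1]

def Rd3 : Matrix (Fin 3) (Fin 3) ℂ := !![0, 0, 1; 0, -1, 0; 1, 0, 0]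

/-- The hybrid H(3). -/
def H3 : Subgroup PGL3 :=
  Subgroup.closure {cls E1d3, cls U1d3, cls U2d3, cls I1d3, cls I2d3}

/-- The hybrid H̃(3). -/
def Ht3 : Subgroup PGL3 := Subgroup.closure {cls E1d3, cls U1d3, cls U2d3}

/-- The hybrid H'(3). -/
def H'3 : Subgroup PGL3 :=
  Subgroup.closure {cls (Pd3^2 * (Rd3 * Qd3^2) * (Pd3^2)⁻¹), cls (Qd3^2), cls (Rd3 * Qd3^2 * Rd3)}

/-- The Eisenstein–Picard modular group Γ(3) = PU(2,1,O₃). -/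
def Gamma3 : Subgroup PGL3 := PU21 O3 hO3

-- d = 1 ------------------------------------------------------------------
def E1d1 : Matrix (Fin 3) (Fin 3) ℂ :=
  !![Complex.I, -1 + Complex.I, 1 - Complex.I;
     -2 * Complex.I, 1 - 2 * Complex.I, -1 + Complex.I;
     -2 * Complex.I, -2 * Complex.I, Complex.I]

def U1d1 : Matrix (Fin 3) (Fin 3) ℂ := !![1, 0, Complex.I; 0, 1, 0; 0, 0, 1]

def E2d1 : Matrix (Fin 3) (Fin 3) ℂ :=
  !![Complex.I, 2 * Complex.I, -2 * Complex.I;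
     1 - Complex.I, 1 - 2 * Complex.I, 2 * Complex.I;
     1 - Complex.I, 1 - Complex.I, Complex.I]

def U2d1 : Matrix (Fin 3) (Fin 3) ℂ := !![1, 0, 0; 0, 1, 0; Complex.I, 0, 1]

/-- The Falbel–Francsics–Parker generators of PU(2,1,O₁). -/
def I0d1 : Matrix (Fin 3) (Fin 3) ℂ := !![0, 0, 1; 0, -1, 0; 1, 0, 0]

def Qd1 : Matrix (Fin 3) (Fin 3) ℂ :=
  !![1, 1 - Complex.I, -1; 0, -1, 1 + Complex.I; 0, 0, 1]

def Td1 : Matrix (Fin 3) (Fin 3) ℂ := !![1, 0, Complex.I; 0, 1, 0; 0, 0, 1]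

def R1d1 : Matrix (Fin 3) (Fin 3) ℂ := Jmat⁻¹ * !![Complex.I,0,0; 0,1,0; 0,0,1] * Jmat

def R2d1 : Matrix (Fin 3) (Fin 3) ℂ := Jmat⁻¹ * !![1,0,0; 0,Complex.I,0; 0,0,1] * Jmat

/-- The hybrid H(1). -/
def H1 : Subgroup PGL3 := Subgroup.closure {cls E1d1, cls U1d1, cls E2d1, cls U2d1}

/-- The hybrid H'(1). -/
def H'1 : Subgroup PGL3 := Subgroup.closure {cls R1d1, cls R2d1, cls U1d1, cls U2d1}

/-- The Gauss–Picard modular group Γ(1) = PU(2,1,O₁). -/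
def Gamma1 : Subgroup PGL3 := PU21 O1 hO1

-- d = 7 ------------------------------------------------------------------
def U1d7 : Matrix (Fin 3) (Fin 3) ℂ :=
  !![1, 0, Complex.I * (Real.sqrt 7 : ℝ); 0, 1, 0; 0, 0, 1]

def U2d7 : Matrix (Fin 3) (Fin 3) ℂ :=
  !![1, 0, 0; 0, 1, 0; Complex.I * (Real.sqrt 7 : ℝ), 0, 1]

def A1d7 : Matrix (Fin 3) (Fin 3) ℂ :=
  !![-(1/2) + Complex.I * (Real.sqrt 7 : ℝ) / 2, -(3/2) + Complex.I * (Real.sqrt 7 : ℝ) / 2,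
       1/2 - Complex.I * (Real.sqrt 7 : ℝ) / 2;
     1, 2, -(3/2) + Complex.I * (Real.sqrt 7 : ℝ) / 2;
     1, 1, -(1/2) + Complex.I * (Real.sqrt 7 : ℝ) / 2]

def B1d7 : Matrix (Fin 3) (Fin 3) ℂ := !![1, 0, 0; -2, -1, 0; -2, -2, 1]

def A2d7 : Matrix (Fin 3) (Fin 3) ℂ :=
  !![-(1/2) + Complex.I * (Real.sqrt 7 : ℝ) / 2, -1, 1;
     3/2 - Complex.I * (Real.sqrt 7 : ℝ) / 2, 2, -1;
     1/2 - Complex.I * (Real.sqrt 7 : ℝ) / 2, 3/2 - Complex.I * (Real.sqrt 7 : ℝ) / 2,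
       -(1/2) + Complex.I * (Real.sqrt 7 : ℝ) / 2]

def B2d7 : Matrix (Fin 3) (Fin 3) ℂ := !![1, 2, -2; 0, -1, 2; 0, 0, 1]

/-- The Mark–Paupert generators of PU(2,1,O₇). -/
def T1d7 : Matrix (Fin 3) (Fin 3) ℂ :=
  !![1, -1, -(1/2) + Complex.I * (Real.sqrt 7 : ℝ) / 2; 0, 1, 1; 0, 0, 1]

def Rd7 : Matrix (Fin 3) (Fin 3) ℂ := !![1, 0, 0; 0, -1, 0; 0, 0, 1]

def Id7 : Matrix (Fin 3) (Fin 3) ℂ := !![0, 0, 1; 0, -1, 0; 1, 0, 0]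

/-- The hybrid H(7). -/
def H7 : Subgroup PGL3 :=
  Subgroup.closure {cls U1d7, cls U2d7, cls A1d7, cls A2d7, cls B1d7, cls B2d7}

/-- The Picard modular group Γ(7) = PU(2,1,O₇). -/
def Gamma7 : Subgroup PGL3 := PU21 O7 hO7

end matrices

section presented
/-- The relators c², a⁶, aca⁻¹c⁻¹, (ab)³, (cab)³, b² in the free group on a,b,c
(a = of 0, b = of 1, c = of 2). -/
def relsG : Set (FreeGroup (Fin 3)) :=
  {(FreeGroup.of 2)^2, (FreeGroup.of 0)^6,
   FreeGroup.of 0 * FreeGroup.of 2 * (FreeGroup.of 0)⁻¹ * (FreeGroup.of 2)⁻¹,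
   (FreeGroup.of 0 * FreeGroup.of 1)^3,
   (FreeGroup.of 2 * FreeGroup.of 0 * FreeGroup.of 1)^3,
   (FreeGroup.of 1)^2}

/-- The presented group G = ⟨a,b,c | c², a⁶, [a,c], (ab)³, (cab)³, b²⟩. -/
abbrev Gpres := PresentedGroup relsG
end presented


lemma homega : omega3^2 + omega3 + 1 = 0 := by
  have key : (Complex.I * (Real.sqrt 3 : ℝ))^2 = -3 := by
    rw [mul_pow, Complex.I_sq, ← Complex.ofReal_pow, Real.sq_sqrt (by norm_num : (0:ℝ) ≤ 3)]
    norm_num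
  rw [omega3]
  linear_combination (1/4) * key

lemma cls_of_isUnit {M : Matrix (Fin 3) (Fin 3) ℂ} (h : IsUnit M) : cls M = pgl h.unit := by
  unfold cls
  rw [dif_pos h]

lemma cls_mul' {A B : Matrix (Fin 3) (Fin 3) ℂ} (hA : IsUnit A) (hB : IsUnit B) :
    cls (A * B) = cls A * cls B := by
  rw [cls_of_isUnit (hA.mul hB), cls_of_isUnit hA, cls_of_isUnit hB, ← _root_.map_mul]
  exact congrArg pgl (Units.ext (by simp))

lemma cls_one' : cls (1 : Matrix (Fin 3) (Fin 3) ℂ) = 1 := by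
  rw [cls_of_isUnit isUnit_one]
  have h1 : (isUnit_one (M := Matrix (Fin 3) (Fin 3) ℂ)).unit = 1 := Units.ext (by simp)
  rw [h1, _root_.map_one]

lemma cls_pow' {A : Matrix (Fin 3) (Fin 3) ℂ} (h : IsUnit A) :
    ∀ n : ℕ, cls A ^ n = cls (A ^ n)
  | 0 => by rw [pow_zero, pow_zero, cls_one']
  | (n+1) => by rw [pow_succ, pow_succ, cls_pow' h n, ← cls_mul' (h.pow n) h]

lemma abelianization_of_surjective {G : Type*} [Group G] :
    Function.Surjective (Abelianization.of : G →* Abelianization G) := fun b =>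
  QuotientGroup.induction_on b fun g => ⟨g, rfl⟩

lemma hQ2 : ((Qd3) * (Qd3) : Matrix (Fin 3) (Fin 3) ℂ) = !![1, 0, 1+2*omega3; 0, 1, 0; 0, 0, 1] := by
  ext i j
  fin_cases i <;> fin_cases j <;>
    simp [Qd3, Matrix.mul_apply, Fin.sum_univ_three, Matrix.vecHead, Matrix.vecTail] <;>
    first | ring1
lemma hP2 : ((Pd3) * (Pd3) : Matrix (Fin 3) (Fin 3) ℂ) = !![1, 1+omega3, omega3; 0, -1-omega3, 1; 0, 0, 1] := by
  ext i j
  fin_cases i <;> fin_cases j <;>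
    simp [Pd3, Matrix.mul_apply, Fin.sum_univ_three, Matrix.vecHead, Matrix.vecTail] <;>
    first | ring1 | linear_combination (-1 : ℂ) * homega | linear_combination (1 : ℂ) * homega
lemma hB : ((Rd3) * !![1, 0, 1+2*omega3; 0, 1, 0; 0, 0, 1] : Matrix (Fin 3) (Fin 3) ℂ) = !![0, 0, 1; 0, -1, 0; 1, 0, 1+2*omega3] := by
  ext i j
  fin_cases i <;> fin_cases j <;>
    simp [Rd3, Matrix.mul_apply, Fin.sum_univ_three, Matrix.vecHead, Matrix.vecTail] <;>
    first | ring1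
lemma hG3 : (!![0, 0, 1; 0, -1, 0; 1, 0, 1+2*omega3] * (Rd3) : Matrix (Fin 3) (Fin 3) ℂ) = !![1, 0, 0; 0, 1, 0; 1+2*omega3, 0, 1] := by
  ext i j
  fin_cases i <;> fin_cases j <;>
    simp [Rd3, Matrix.mul_apply, Fin.sum_univ_three, Matrix.vecHead, Matrix.vecTail] <;>
    first | ring1
lemma hcross : (!![omega3, 1+omega3, -1-omega3; 1, 0, 1+omega3; 1, 1, omega3] * !![1, 1+omega3, omega3; 0, -1-omega3, 1; 0, 0, 1] : Matrix (Fin 3) (Fin 3) ℂ) = !![1, 1+omega3, omega3; 0, -1-omega3, 1; 0, 0, 1] * !![0, 0, 1; 0, -1, 0; 1, 0, 1+2*omega3] := by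
  ext i j
  fin_cases i <;> fin_cases j <;>
    simp [Matrix.mul_apply, Fin.sum_univ_three, Matrix.vecHead, Matrix.vecTail] <;>
    first | ring1 | linear_combination (-1 : ℂ) * homega
lemma hA2 : (!![omega3, 1+omega3, -1-omega3; 1, 0, 1+omega3; 1, 1, omega3] * !![omega3, 1+omega3, -1-omega3; 1, 0, 1+omega3; 1, 1, omega3] : Matrix (Fin 3) (Fin 3) ℂ) = !![-1-omega3, -2-omega3, 2+omega3; 1+2*omega3, 2+2*omega3, -2-omega3; 1+2*omega3, 1+2*omega3, -1-omega3] := by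
  ext i j
  fin_cases i <;> fin_cases j <;>
    simp [Matrix.mul_apply, Fin.sum_univ_three, Matrix.vecHead, Matrix.vecTail] <;>
    first | ring1 | linear_combination (-1 : ℂ) * homega | linear_combination (1 : ℂ) * homega
lemma hA3 : (!![-1-omega3, -2-omega3, 2+omega3; 1+2*omega3, 2+2*omega3, -2-omega3; 1+2*omega3, 1+2*omega3, -1-omega3] * !![omega3, 1+omega3, -1-omega3; 1, 0, 1+omega3; 1, 1, omega3] : Matrix (Fin 3) (Fin 3) ℂ) = !![1, 2, -2; -2, -3, 2; -2, -2, 1] := by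
  ext i j
  fin_cases i <;> fin_cases j <;>
    simp [Matrix.mul_apply, Fin.sum_univ_three, Matrix.vecHead, Matrix.vecTail] <;>
    first | ring1 | linear_combination (-1 : ℂ) * homega | linear_combination (1 : ℂ) * homega | linear_combination (2 : ℂ) * homega
lemma hA4 : (!![1, 2, -2; -2, -3, 2; -2, -2, 1] * !![omega3, 1+omega3, -1-omega3; 1, 0, 1+omega3; 1, 1, omega3] : Matrix (Fin 3) (Fin 3) ℂ) = !![omega3, -1+omega3, 1-omega3; -1-2*omega3, -2*omega3, -1+omega3; -1-2*omega3, -1-2*omega3, omega3] := by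
  ext i j
  fin_cases i <;> fin_cases j <;>
    simp [Matrix.mul_apply, Fin.sum_univ_three, Matrix.vecHead, Matrix.vecTail] <;>
    first | ring1
lemma hA5 : (!![omega3, -1+omega3, 1-omega3; -1-2*omega3, -2*omega3, -1+omega3; -1-2*omega3, -1-2*omega3, omega3] * !![omega3, 1+omega3, -1-omega3; 1, 0, 1+omega3; 1, 1, omega3] : Matrix (Fin 3) (Fin 3) ℂ) = !![-1-omega3, -omega3, omega3; 1, 0, -omega3; 1, 1, -1-omega3] := by
  ext i j
  fin_cases i <;> fin_cases j <;>
    simp [Matrix.mul_apply, Fin.sum_univ_three, Matrix.vecHead, Matrix.vecTail] <;>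
    first | ring1 | linear_combination (-2 : ℂ) * homega | linear_combination (-1 : ℂ) * homega | linear_combination (1 : ℂ) * homega
lemma hA6 : (!![-1-omega3, -omega3, omega3; 1, 0, -omega3; 1, 1, -1-omega3] * !![omega3, 1+omega3, -1-omega3; 1, 0, 1+omega3; 1, 1, omega3] : Matrix (Fin 3) (Fin 3) ℂ) = 1 := by
  ext i j
  fin_cases i <;> fin_cases j <;>
    simp [Matrix.mul_apply, Fin.sum_univ_three, Matrix.vecHead, Matrix.vecTail] <;>
    first | ring1 | linear_combination (-1 : ℂ) * homega | linear_combination (1 : ℂ) * homega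
lemma hC : (!![omega3, 1+omega3, -1-omega3; 1, 0, 1+omega3; 1, 1, omega3] * !![1, 0, 0; 0, 1, 0; 1+2*omega3, 0, 1] : Matrix (Fin 3) (Fin 3) ℂ) = !![1, 1+omega3, -1-omega3; omega3, 0, 1+omega3; -1-omega3, 1, omega3] := by
  ext i j
  fin_cases i <;> fin_cases j <;>
    simp [Matrix.mul_apply, Fin.sum_univ_three, Matrix.vecHead, Matrix.vecTail] <;>
    first | ring1 | linear_combination (-2 : ℂ) * homega | linear_combination (2 : ℂ) * homega
lemma hC2 : (!![1, 1+omega3, -1-omega3; omega3, 0, 1+omega3; -1-omega3, 1, omega3] * !![1, 1+omega3, -1-omega3; omega3, 0, 1+omega3; -1-omega3, 1, omega3] : Matrix (Fin 3) (Fin 3) ℂ) = !![omega3, 0, 0; 0, omega3, 0; 0, 0, omega3] := by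
  ext i j
  fin_cases i <;> fin_cases j <;>
    simp [Matrix.mul_apply, Fin.sum_univ_three, Matrix.vecHead, Matrix.vecTail] <;>
    first | ring1 | linear_combination (-1 : ℂ) * homega | linear_combination (1 : ℂ) * homega | linear_combination (2 : ℂ) * homega
lemma hC3 : (!![omega3, 0, 0; 0, omega3, 0; 0, 0, omega3] * !![1, 1+omega3, -1-omega3; omega3, 0, 1+omega3; -1-omega3, 1, omega3] : Matrix (Fin 3) (Fin 3) ℂ) = !![omega3, -1, 1; -1-omega3, 0, -1; 1, omega3, -1-omega3] := by
  ext i j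
  fin_cases i <;> fin_cases j <;>
    simp [Matrix.mul_apply, Fin.sum_univ_three, Matrix.vecHead, Matrix.vecTail] <;>
    first | ring1 | linear_combination (-1 : ℂ) * homega | linear_combination (1 : ℂ) * homega
lemma hC4 : (!![omega3, -1, 1; -1-omega3, 0, -1; 1, omega3, -1-omega3] * !![1, 1+omega3, -1-omega3; omega3, 0, 1+omega3; -1-omega3, 1, omega3] : Matrix (Fin 3) (Fin 3) ℂ) = !![-1-omega3, 0, 0; 0, -1-omega3, 0; 0, 0, -1-omega3] := by
  ext i j
  fin_cases i <;> fin_cases j <;>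
    simp [Matrix.mul_apply, Fin.sum_univ_three, Matrix.vecHead, Matrix.vecTail] <;>
    first | ring1 | linear_combination (-1 : ℂ) * homega | linear_combination (1 : ℂ) * homega | linear_combination (2 : ℂ) * homega
lemma hC5 : (!![-1-omega3, 0, 0; 0, -1-omega3, 0; 0, 0, -1-omega3] * !![1, 1+omega3, -1-omega3; omega3, 0, 1+omega3; -1-omega3, 1, omega3] : Matrix (Fin 3) (Fin 3) ℂ) = !![-1-omega3, -omega3, omega3; 1, 0, -omega3; omega3, -1-omega3, 1] := by
  ext i j
  fin_cases i <;> fin_cases j <;>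
    simp [Matrix.mul_apply, Fin.sum_univ_three, Matrix.vecHead, Matrix.vecTail] <;>
    first | ring1 | linear_combination (-1 : ℂ) * homega | linear_combination (1 : ℂ) * homega
lemma hC6 : (!![-1-omega3, -omega3, omega3; 1, 0, -omega3; omega3, -1-omega3, 1] * !![1, 1+omega3, -1-omega3; omega3, 0, 1+omega3; -1-omega3, 1, omega3] : Matrix (Fin 3) (Fin 3) ℂ) = 1 := by
  ext i j
  fin_cases i <;> fin_cases j <;>
    simp [Matrix.mul_apply, Fin.sum_univ_three, Matrix.vecHead, Matrix.vecTail] <;>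
    first | ring1 | linear_combination (-2 : ℂ) * homega | linear_combination (-1 : ℂ) * homega | linear_combination (1 : ℂ) * homega
lemma hD : (!![1, 0, 0; 0, 1, 0; 1+2*omega3, 0, 1] * !![1, 0, 1+2*omega3; 0, 1, 0; 0, 0, 1] : Matrix (Fin 3) (Fin 3) ℂ) = !![1, 0, 1+2*omega3; 0, 1, 0; 1+2*omega3, 0, -2] := by
  ext i j
  fin_cases i <;> fin_cases j <;>
    simp [Matrix.mul_apply, Fin.sum_univ_three, Matrix.vecHead, Matrix.vecTail] <;>
    first | ring1 | linear_combination (4 : ℂ) * homega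
lemma hD2 : (!![1, 0, 1+2*omega3; 0, 1, 0; 1+2*omega3, 0, -2] * !![1, 0, 1+2*omega3; 0, 1, 0; 1+2*omega3, 0, -2] : Matrix (Fin 3) (Fin 3) ℂ) = !![-2, 0, -1-2*omega3; 0, 1, 0; -1-2*omega3, 0, 1] := by
  ext i j
  fin_cases i <;> fin_cases j <;>
    simp [Matrix.mul_apply, Fin.sum_univ_three, Matrix.vecHead, Matrix.vecTail] <;>
    first | ring1 | linear_combination (4 : ℂ) * homega
lemma hD3 : (!![-2, 0, -1-2*omega3; 0, 1, 0; -1-2*omega3, 0, 1] * !![1, 0, 1+2*omega3; 0, 1, 0; 1+2*omega3, 0, -2] : Matrix (Fin 3) (Fin 3) ℂ) = 1 := by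
  ext i j
  fin_cases i <;> fin_cases j <;>
    simp [Matrix.mul_apply, Fin.sum_univ_three, Matrix.vecHead, Matrix.vecTail] <;>
    first | ring1 | linear_combination (-4 : ℂ) * homega
lemma hQ2u1 : (!![1, 0, 1+2*omega3; 0, 1, 0; 0, 0, 1] * !![1, 0, -1-2*omega3; 0, 1, 0; 0, 0, 1] : Matrix (Fin 3) (Fin 3) ℂ) = 1 := by
  ext i j
  fin_cases i <;> fin_cases j <;>
    simp [Matrix.mul_apply, Fin.sum_univ_three, Matrix.vecHead, Matrix.vecTail] <;>
    first | ring1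
lemma hQ2u2 : (!![1, 0, -1-2*omega3; 0, 1, 0; 0, 0, 1] * !![1, 0, 1+2*omega3; 0, 1, 0; 0, 0, 1] : Matrix (Fin 3) (Fin 3) ℂ) = 1 := by
  ext i j
  fin_cases i <;> fin_cases j <;>
    simp [Matrix.mul_apply, Fin.sum_univ_three, Matrix.vecHead, Matrix.vecTail] <;>
    first | ring1
lemma hG3u1 : (!![1, 0, 0; 0, 1, 0; 1+2*omega3, 0, 1] * !![1, 0, 0; 0, 1, 0; -1-2*omega3, 0, 1] : Matrix (Fin 3) (Fin 3) ℂ) = 1 := by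
  ext i j
  fin_cases i <;> fin_cases j <;>
    simp [Matrix.mul_apply, Fin.sum_univ_three, Matrix.vecHead, Matrix.vecTail] <;>
    first | ring1
lemma hG3u2 : (!![1, 0, 0; 0, 1, 0; -1-2*omega3, 0, 1] * !![1, 0, 0; 0, 1, 0; 1+2*omega3, 0, 1] : Matrix (Fin 3) (Fin 3) ℂ) = 1 := by
  ext i j
  fin_cases i <;> fin_cases j <;>
    simp [Matrix.mul_apply, Fin.sum_univ_three, Matrix.vecHead, Matrix.vecTail] <;>
    first | ring1
lemma hA0u1 : (!![omega3, 1+omega3, -1-omega3; 1, 0, 1+omega3; 1, 1, omega3] * !![-1-omega3, -omega3, omega3; 1, 0, -omega3; 1, 1, -1-omega3] : Matrix (Fin 3) (Fin 3) ℂ) = 1 := by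
  ext i j
  fin_cases i <;> fin_cases j <;>
    simp [Matrix.mul_apply, Fin.sum_univ_three, Matrix.vecHead, Matrix.vecTail] <;>
    first | ring1 | linear_combination (-1 : ℂ) * homega | linear_combination (1 : ℂ) * homega
lemma hA0u2 : (!![-1-omega3, -omega3, omega3; 1, 0, -omega3; 1, 1, -1-omega3] * !![omega3, 1+omega3, -1-omega3; 1, 0, 1+omega3; 1, 1, omega3] : Matrix (Fin 3) (Fin 3) ℂ) = 1 := by
  ext i j
  fin_cases i <;> fin_cases j <;>
    simp [Matrix.mul_apply, Fin.sum_univ_three, Matrix.vecHead, Matrix.vecTail] <;>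
    first | ring1 | linear_combination (-1 : ℂ) * homega | linear_combination (1 : ℂ) * homega
lemma hCu1 : (!![1, 1+omega3, -1-omega3; omega3, 0, 1+omega3; -1-omega3, 1, omega3] * !![-1-omega3, -omega3, omega3; 1, 0, -omega3; omega3, -1-omega3, 1] : Matrix (Fin 3) (Fin 3) ℂ) = 1 := by
  ext i j
  fin_cases i <;> fin_cases j <;>
    simp [Matrix.mul_apply, Fin.sum_univ_three, Matrix.vecHead, Matrix.vecTail] <;>
    first | ring1 | linear_combination (-2 : ℂ) * homega | linear_combination (-1 : ℂ) * homega | linear_combination (1 : ℂ) * homega | linear_combination (2 : ℂ) * homega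
lemma hCu2 : (!![-1-omega3, -omega3, omega3; 1, 0, -omega3; omega3, -1-omega3, 1] * !![1, 1+omega3, -1-omega3; omega3, 0, 1+omega3; -1-omega3, 1, omega3] : Matrix (Fin 3) (Fin 3) ℂ) = 1 := by
  ext i j
  fin_cases i <;> fin_cases j <;>
    simp [Matrix.mul_apply, Fin.sum_univ_three, Matrix.vecHead, Matrix.vecTail] <;>
    first | ring1 | linear_combination (-2 : ℂ) * homega | linear_combination (-1 : ℂ) * homega | linear_combination (1 : ℂ) * homega
lemma hDu1 : (!![1, 0, 1+2*omega3; 0, 1, 0; 1+2*omega3, 0, -2] * !![-2, 0, -1-2*omega3; 0, 1, 0; -1-2*omega3, 0, 1] : Matrix (Fin 3) (Fin 3) ℂ) = 1 := by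
  ext i j
  fin_cases i <;> fin_cases j <;>
    simp [Matrix.mul_apply, Fin.sum_univ_three, Matrix.vecHead, Matrix.vecTail] <;>
    first | ring1 | linear_combination (-4 : ℂ) * homega
lemma hDu2 : (!![-2, 0, -1-2*omega3; 0, 1, 0; -1-2*omega3, 0, 1] * !![1, 0, 1+2*omega3; 0, 1, 0; 1+2*omega3, 0, -2] : Matrix (Fin 3) (Fin 3) ℂ) = 1 := by
  ext i j
  fin_cases i <;> fin_cases j <;>
    simp [Matrix.mul_apply, Fin.sum_univ_three, Matrix.vecHead, Matrix.vecTail] <;>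
    first | ring1 | linear_combination (-4 : ℂ) * homega


/-- the abelianization of the hybrid H'(3) is finite. -/
theorem stmt9 : Finite (Abelianization ↥H'3) := by
  classical
  -- abbreviations for the concrete matrices
  set A0 : Matrix (Fin 3) (Fin 3) ℂ := !![omega3, 1+omega3, -1-omega3; 1, 0, 1+omega3; 1, 1, omega3] with hA0def
  set Q2 : Matrix (Fin 3) (Fin 3) ℂ := !![1, 0, 1+2*omega3; 0, 1, 0; 0, 0, 1] with hQ2def
  set G3 : Matrix (Fin 3) (Fin 3) ℂ := !![1, 0, 0; 0, 1, 0; 1+2*omega3, 0, 1] with hG3def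
  set Cm : Matrix (Fin 3) (Fin 3) ℂ := !![1, 1+omega3, -1-omega3; omega3, 0, 1+omega3; -1-omega3, 1, omega3] with hCdef
  set Dm : Matrix (Fin 3) (Fin 3) ℂ := !![1, 0, 1+2*omega3; 0, 1, 0; 1+2*omega3, 0, -2] with hDdef
  -- units
  have uA0 : IsUnit A0 := ⟨⟨A0, _, hA0u1, hA0u2⟩, rfl⟩
  have uQ2 : IsUnit Q2 := ⟨⟨Q2, _, hQ2u1, hQ2u2⟩, rfl⟩
  have uG3 : IsUnit G3 := ⟨⟨G3, _, hG3u1, hG3u2⟩, rfl⟩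
  have uC : IsUnit Cm := ⟨⟨Cm, _, hCu1, hCu2⟩, rfl⟩
  have uD : IsUnit Dm := ⟨⟨Dm, _, hDu1, hDu2⟩, rfl⟩
  -- power identities
  have pow6 : ∀ X : Matrix (Fin 3) (Fin 3) ℂ, X^6 = ((((X*X)*X)*X)*X)*X := fun X => by
    rw [pow_succ, pow_succ, pow_succ, pow_succ, pow_succ, pow_one]
  have pow3 : ∀ X : Matrix (Fin 3) (Fin 3) ℂ, X^3 = (X*X)*X := fun X => by
    rw [pow_succ, pow_succ, pow_one]
  have hA0pow : A0^6 = 1 := by rw [pow6, hA2, hA3, hA4, hA5, hA6]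
  have hCpow : Cm^6 = 1 := by rw [pow6, hC2, hC3, hC4, hC5, hC6]
  have hDpow : Dm^3 = 1 := by rw [pow3, hD2, hD3]
  -- generator normalizations
  have hdet : IsUnit (Pd3^2).det := by
    have hval : (Pd3^2).det = -1 - omega3 := by
      rw [sq, hP2, Matrix.det_fin_three]
      simp [Matrix.vecHead, Matrix.vecTail]
    rw [hval, isUnit_iff_ne_zero]
    intro h
    exact one_ne_zero (by linear_combination homega + omega3 * h)
  have hP2i : Pd3^2 * (Pd3^2)⁻¹ = 1 := Matrix.mul_nonsing_inv _ hdet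
  have hgen1 : Pd3^2 * (Rd3 * Qd3^2) * (Pd3^2)⁻¹ = A0 := by
    have h1 : Rd3 * Qd3^2 = !![(0:ℂ), 0, 1; 0, -1, 0; 1, 0, 1+2*omega3] := by
      rw [sq, hQ2, hB]
    have h2 : A0 * Pd3^2 = Pd3^2 * !![(0:ℂ), 0, 1; 0, -1, 0; 1, 0, 1+2*omega3] := by
      rw [sq, hP2]; exact hcross
    rw [h1, ← h2, mul_assoc, hP2i, mul_one]
  have hgen2 : Qd3^2 = Q2 := by rw [sq, hQ2]
  have hgen3 : Rd3 * Qd3^2 * Rd3 = G3 := by rw [sq, hQ2, hB, hG3]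
  -- relations in PGL3
  have rel1 : (cls A0)^6 = 1 := by rw [cls_pow' uA0, hA0pow, cls_one']
  have rel2 : (cls A0 * cls G3)^6 = 1 := by
    rw [← cls_mul' uA0 uG3, hC, cls_pow' uC, hCpow, cls_one']
  have rel3 : (cls G3 * cls Q2)^3 = 1 := by
    rw [← cls_mul' uG3 uQ2, hD, cls_pow' uD, hDpow, cls_one']
  -- the generating set
  set S : Set PGL3 := {cls (Pd3^2 * (Rd3 * Qd3^2) * (Pd3^2)⁻¹), cls (Qd3^2),
    cls (Rd3 * Qd3^2 * Rd3)} with hSdef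
  have hH : H'3 = Subgroup.closure S := rfl
  set y1 : ↥H'3 := ⟨cls (Pd3^2 * (Rd3 * Qd3^2) * (Pd3^2)⁻¹),
    Subgroup.subset_closure (by left; rfl)⟩ with hy1def
  set y2 : ↥H'3 := ⟨cls (Qd3^2), Subgroup.subset_closure (by right; left; rfl)⟩ with hy2def
  set y3 : ↥H'3 := ⟨cls (Rd3 * Qd3^2 * Rd3),
    Subgroup.subset_closure (by right; right; rfl)⟩ with hy3def
  have hv1 : (y1 : PGL3) = cls A0 := by rw [hy1def]; exact congrArg cls hgen1
  have hv2 : (y2 : PGL3) = cls Q2 := by rw [hy2def]; exact congrArg cls hgen2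
  have hv3 : (y3 : PGL3) = cls G3 := by rw [hy3def]; exact congrArg cls hgen3
  -- torsion of the images in the abelianization
  set f : ↥H'3 →* Abelianization ↥H'3 := Abelianization.of with hfdef
  have hfs : Function.Surjective f := abelianization_of_surjective
  have hsub1 : y1^6 = 1 := by
    apply Subtype.ext
    push_cast
    rw [hv1]
    exact rel1
  have hsub13 : (y1 * y3)^6 = 1 := by
    apply Subtype.ext
    push_cast
    rw [hv1, hv3]
    exact rel2
  have hsub32 : (y3 * y2)^3 = 1 := by
    apply Subtype.ext
    push_cast
    rw [hv3, hv2]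
    exact rel3
  have ha1 : (f y1)^6 = 1 := by rw [← _root_.map_pow, hsub1, _root_.map_one]
  have ha13 : (f y1 * f y3)^6 = 1 := by rw [← _root_.map_mul, ← _root_.map_pow, hsub13, _root_.map_one]
  have ha32 : (f y3 * f y2)^3 = 1 := by rw [← _root_.map_mul, ← _root_.map_pow, hsub32, _root_.map_one]
  have ha3 : (f y3)^6 = 1 := by
    have := ha13
    rw [mul_pow, ha1, one_mul] at this
    exact this
  have ha2 : (f y2)^6 = 1 := by
    rw [mul_pow] at ha32
    have h6 : ((f y3)^3 * (f y2)^3)^2 = 1 := by rw [ha32, one_pow]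
    rw [mul_pow, ← pow_mul, ← pow_mul] at h6
    norm_num at h6
    rw [ha3, one_mul] at h6
    exact h6
  -- finite generation
  haveI hfin : Finite ↥S :=
    (((Set.finite_singleton _).insert _).insert _).to_subtype
  haveI hfg : Group.FG ↥H'3 := Group.closure_finite_fg S
  haveI : Group.FG (Abelianization ↥H'3) := Group.fg_of_surjective hfs
  -- torsion
  apply CommGroup.finite_of_fg_torsion
  intro a
  obtain ⟨y, rfl⟩ := hfs a
  have hker : (⊤ : Subgroup ↥H'3) ≤ (CommGroup.torsion (Abelianization ↥H'3)).comap f := by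
    have htop : Subgroup.closure (H'3.subtype ⁻¹' S) = ⊤ :=
      Subgroup.closure_preimage_eq_top S
    rw [← htop]
    apply (Subgroup.closure_le _).2
    rintro z hz
    rw [Set.mem_preimage] at hz
    rcases hz with h | h | h
    · have hz1 : z = y1 := Subtype.ext h
      subst hz1
      exact Subgroup.mem_comap.mpr (isOfFinOrder_iff_pow_eq_one.mpr ⟨6, by norm_num, ha1⟩)
    · have hz2 : z = y2 := Subtype.ext h
      subst hz2
      exact Subgroup.mem_comap.mpr (isOfFinOrder_iff_pow_eq_one.mpr ⟨6, by norm_num, ha2⟩)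
    · have hz3 : z = y3 := Subtype.ext h
      subst hz3
      exact Subgroup.mem_comap.mpr (isOfFinOrder_iff_pow_eq_one.mpr ⟨6, by norm_num, ha3⟩)
  exact Subgroup.mem_comap.mp (hker (Subgroup.mem_top y))


end
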